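/- Assume S is convex, let x ∈ Ṡ_{{1,2}} be a planar fixed point of P, let γ₁ ∈ ℝ be arbitrary and set ẽ = e₃ + γ₁·w. Then there exist ε > 0 and η > 0 such that: x − εr ∈ Γ and x + εr ∈ C ∖ Γ; for every δ ∈ [0, η] there is exactly one t ∈ [−ε, ε] with x + δẽ + t·r ∈ S; and, writing this unique point of S as x + δẽ − j(δ)·r, the function j : [0, η] → ℝ is continuous and satisfies j(0) = 0. -/

import Mathlib

open Set Filter Metric MeasureTheory

noncomputable section

/-- The ambient space: ℝ³ with the Euclidean norm. -/
abbrev V3 : Type := EuclideanSpace ℝ (Fin 3)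

/-- Standard basis vectors. -/
def e3 (i : Fin 3) : V3 := EuclideanSpace.single i 1

/-- The non-negative octant `C`. -/
def octC : Set V3 := {x | ∀ i, 0 ≤ x i}

/-- The interior of the octant, `C°`. -/
def octInt : Set V3 := {x | ∀ i, 0 < x i}

/-- The coordinate subspace `H_I`. -/
def planeH (I : Finset (Fin 3)) : Set V3 := {x | ∀ j ∉ I, x j = 0}

/-- The face `H_I⁺ = C ∩ H_I` (as a set of points, or the cone `K_I` of vectors). -/
def faceH (I : Finset (Fin 3)) : Set V3 := octC ∩ planeH I

/-- The relative interior `Ḣ_I⁺` (resp. `K̇_I`). -/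
def faceDot (I : Finset (Fin 3)) : Set V3 := {x ∈ faceH I | ∀ i ∈ I, 0 < x i}

/-- The relative boundary `∂H_I⁺`. -/
def faceBd (I : Finset (Fin 3)) : Set V3 := faceH I \ faceDot I

/-- The Jacobian matrix `DP(x)` of a map `P` at `x`. -/
def jacM (P : V3 → V3) (x : V3) : Matrix (Fin 3) (Fin 3) ℝ :=
  Matrix.of fun i j => (fderiv ℝ P x (e3 j)) i

/-- The `I × I` submatrix of a `3 × 3` matrix. -/
def subM (I : Finset (Fin 3)) (M : Matrix (Fin 3) (Fin 3) ℝ) :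
    Matrix {i // i ∈ I} {i // i ∈ I} ℝ :=
  M.submatrix Subtype.val Subtype.val

/-- The standing hypotheses (H1), (H2), (H3′), (H4′), (H5), (H6):
`Pt` is the `C²` diffeomorphism `P̃` of an open set `U ⊇ C` onto its image,
`Qt` its inverse, and `u i` are the axial fixed points. -/
structure CompSetting where
  U : Set V3
  Pt : V3 → V3
  Qt : V3 → V3
  u : Fin 3 → V3
  -- (H1): C² diffeomorphism of an open neighbourhood of C onto its image
  openU : IsOpen U
  octSubU : octC ⊆ U
  smooth : ContDiffOn ℝ 2 Pt U
  openImage : IsOpen (Pt '' U)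
  smoothInv : ContDiffOn ℝ 2 Qt (Pt '' U)
  left_inv : ∀ x ∈ U, Qt (Pt x) = x
  right_inv : ∀ y ∈ Pt '' U, Pt (Qt y) = y
  -- (H2)
  h2 : ∀ I : Finset (Fin 3), I.Nonempty →
    ∀ A ∈ ({faceH I, faceDot I, faceBd I} : Set (Set V3)),
      Pt '' A ⊆ A ∧ ∀ x ∈ octC, Pt x ∈ A → x ∈ A
  -- (H3′)
  h3 : ∀ I : Finset (Fin 3), I.Nonempty → ∀ x ∈ faceDot I,
      (∀ i ∈ I, ∀ j ∈ I, 0 < (jacM Pt x)⁻¹ i j) ∧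
      ∀ v : Fin 3 → ℝ, (∀ j, 0 ≤ v j) → (∀ j ∈ I, v j = 0) → v ≠ 0 →
        ∃ j ∈ I, 0 < (jacM Pt x)⁻¹.mulVec v j
  -- (H4′)
  h4_mem : ∀ i, u i ∈ faceDot {i}
  h4_fix : ∀ i, Pt (u i) = u i
  h4_unique : ∀ i, ∀ y ∈ faceDot {i}, Pt y = y → y = u i
  h4_diag : ∀ i, 0 < jacM Pt (u i) i i ∧ jacM Pt (u i) i i < 1
  h4_off : ∀ i j, j ≠ i → jacM Pt (u i) i j < 0
  -- (H5)
  h5 : ∀ I : Finset (Fin 3), I.Nonempty → ∀ x ∈ faceDot I, x ≠ 0 →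
    ∀ p : ℕ, 1 ≤ p → Pt^[p] x = x →
      ∃ μ : ℝ, (μ : ℂ) ∈ spectrum ℂ ((subM I (jacM (Pt^[p]) x)).map Complex.ofReal) ∧
        (∀ ν ∈ spectrum ℂ ((subM I (jacM (Pt^[p]) x)).map Complex.ofReal),
          |μ| ≤ ‖ν‖) ∧ μ < 1
  -- (H6)
  h6 : ∀ I : Finset (Fin 3), I.Nonempty → ∀ x ∈ faceDot I, ∀ y ∈ faceDot I,
    (∀ i ∈ I, 0 < Pt x i) → (∀ i ∈ I, Pt x i < Pt y i) →
    ∀ i ∈ I, x i / y i ≤ Pt x i / Pt y i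

/-- Sum of the coordinates. -/
def sumCoords (x : V3) : ℝ := x 0 + x 1 + x 2

/-- The radial projection `R`. -/
def radProj (x : V3) : V3 := (sumCoords x)⁻¹ • x

/-- The standard probability 2-simplex `△`. -/
def simplex2 : Set V3 := {x ∈ octC | sumCoords x = 1}

/-- The plane `{x : x₁ + x₂ + x₃ = 1}` containing `△`. -/
def plane1 : Set V3 := {x | sumCoords x = 1}

/-- The ω-limit set of `x` under `P`. -/
def omegaLim (P : V3 → V3) (x : V3) : Set V3 :=
  {y | ∃ φ : ℕ → ℕ, StrictMono φ ∧ Tendsto (fun k => P^[φ k] x) atTop (nhds y)}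

/-- `Γ = {αx : α ∈ [0,1], x ∈ S}`. -/
def gammaOf (S : Set V3) : Set V3 := {y | ∃ α ∈ Icc (0:ℝ) 1, ∃ x ∈ S, y = α • x}

/-- `S` is a carrying simplex for the map `P = Pt|_C`. -/
def IsCarryingSimplex (E : CompSetting) (S : Set V3) : Prop :=
  IsCompact S ∧ S ⊆ octC ∧ (0 : V3) ∉ S ∧ E.Pt '' S = S ∧
  -- (i) the radial projection restricts to a homeomorphism of S onto △
  (∃ h : S ≃ₜ simplex2, ∀ p : S, (h p : V3) = radProj (p : V3)) ∧
  -- (ii) unordered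
  (∀ x ∈ S, ∀ y ∈ S, x ≠ y → ¬ ∀ i, x i < y i) ∧
  (∀ x ∈ S ∩ octInt, ∀ y ∈ S ∩ octInt, x ≠ y → ¬ ∀ i, x i ≤ y i) ∧
  -- (iii) all nontrivial ω-limit sets lie in S
  (∀ x ∈ octC, x ≠ 0 → omegaLim E.Pt x ⊆ S) ∧
  -- (iv) Γ is the global attractor: compact, invariant, attracting
  IsCompact (gammaOf S) ∧ E.Pt '' gammaOf S = gammaOf S ∧
  (∀ B : Set V3, B ⊆ octC → Bornology.IsBounded B → ∀ ε > 0, ∃ n₀ : ℕ,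
    ∀ n ≥ n₀, ∀ b ∈ B, E.Pt^[n] b ∈ Metric.thickening ε (gammaOf S))

/-- The set `C₁(A, x)` of limiting unit directions of `A` at `x`. -/
def dirSet (A : Set V3) (x : V3) : Set V3 :=
  {v | ∃ s : ℕ → V3, (∀ n, s n ∈ A ∧ s n ≠ x) ∧
    Tendsto s atTop (nhds x) ∧
    Tendsto (fun n => (‖s n - x‖)⁻¹ • (s n - x)) atTop (nhds v)}

/-- The tangent cone `C(A, x) = [0, ∞) · C₁(A, x)`. -/
def tanCone (A : Set V3) (x : V3) : Set V3 :=
  {v | ∃ t : ℝ, 0 ≤ t ∧ ∃ z ∈ dirSet A x, v = t • z}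

/-- `S` is a `C¹` submanifold-with-corners neatly embedded in `C`, diffeomorphic
to `△` via the radial projection: `(R|_S)⁻¹(y) = ρ(y)·y` with `ρ` a `C¹` positive
function on a relatively open neighbourhood of `△` in the plane. -/
def NeatC1 (S : Set V3) : Prop :=
  ∃ Ut : Set V3, Ut ⊆ plane1 ∧ simplex2 ⊆ Ut ∧
    (∃ O : Set V3, IsOpen O ∧ Ut = O ∩ plane1) ∧
    ∃ ρ : V3 → ℝ, ContDiffOn ℝ 1 ρ Ut ∧ (∀ y ∈ Ut, 0 < ρ y) ∧
      ∀ y ∈ simplex2, ρ y • y ∈ S ∧ radProj (ρ y • y) = y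

end

open Topology

namespace CSAux

lemma smul_apply' (c : ℝ) (y : V3) (i : Fin 3) : (c • y) i = c * y i := rfl
lemma add_apply' (a b : V3) (i : Fin 3) : (a + b) i = a i + b i := rfl

lemma sumCoords_smul (c : ℝ) (y : V3) : sumCoords (c • y) = c * sumCoords y := by
  simp only [sumCoords, smul_apply']; ring

lemma sumCoords_add (a b : V3) : sumCoords (a + b) = sumCoords a + sumCoords b := by
  simp only [sumCoords, add_apply']; ring

lemma cont_sumCoords : Continuous sumCoords := by
  unfold sumCoords; fun_prop

lemma sum_pos {z : V3} (hz : z ∈ octC) (h0 : z ≠ 0) : 0 < sumCoords z := by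
  have h1 : 0 < z 0 ∨ 0 < z 1 ∨ 0 < z 2 := by
    by_contra h
    push_neg at h
    obtain ⟨a, b, c⟩ := h
    apply h0
    ext i
    fin_cases i
    · exact le_antisymm a (hz 0)
    · exact le_antisymm b (hz 1)
    · exact le_antisymm c (hz 2)
  have h0' : 0 ≤ z 0 := hz 0
  have h1' : 0 ≤ z 1 := hz 1
  have h2' : 0 ≤ z 2 := hz 2
  unfold sumCoords
  rcases h1 with h | h | h <;> linarith

lemma radProj_mem {z : V3} (hz : z ∈ octC) (h0 : z ≠ 0) : radProj z ∈ simplex2 := by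
  have hs := sum_pos hz h0
  constructor
  · intro i
    rw [radProj, smul_apply']
    exact mul_nonneg (inv_nonneg.2 hs.le) (hz i)
  · rw [radProj, sumCoords_smul, inv_mul_cancel₀ hs.ne']

lemma smul_radProj {z : V3} (hz : z ∈ octC) (h0 : z ≠ 0) : sumCoords z • radProj z = z := by
  rw [radProj, smul_smul, mul_inv_cancel₀ (sum_pos hz h0).ne', one_smul]

section SPsec

variable {S : Set V3} (hom : S ≃ₜ simplex2)

open Classical in
/-- the point of `S` over a simplex point -/
noncomputable def SPq : V3 → V3 := fun y =>
  if hy : y ∈ simplex2 then ((hom.symm ⟨y, hy⟩ : S) : V3) else 0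

/-- the point of `S` on the ray of `z` -/
noncomputable def SPm : V3 → V3 := fun z => SPq hom (radProj z)

lemma SPq_memS {y : V3} (hy : y ∈ simplex2) : SPq hom y ∈ S := by
  simp only [SPq, dif_pos hy]
  exact (hom.symm ⟨y, hy⟩).2

lemma SPq_rad (hh : ∀ p : S, ((hom p : simplex2) : V3) = radProj (p : V3))
    {y : V3} (hy : y ∈ simplex2) : radProj (SPq hom y) = y := by
  simp only [SPq, dif_pos hy]
  have h1 := hh (hom.symm ⟨y, hy⟩)
  rw [Homeomorph.apply_symm_apply] at h1
  exact h1.symm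

lemma SPq_of_mem (hh : ∀ p : S, ((hom p : simplex2) : V3) = radProj (p : V3))
    {z : V3} (hzS : z ∈ S) (hz : radProj z ∈ simplex2) :
    SPq hom (radProj z) = z := by
  have h1 := hh ⟨z, hzS⟩
  have h2 : hom ⟨z, hzS⟩ = ⟨radProj z, hz⟩ := Subtype.ext h1
  simp only [SPq, dif_pos hz]
  rw [← h2, Homeomorph.symm_apply_apply]

lemma SPq_contOn : ContinuousOn (SPq hom) simplex2 := by
  rw [continuousOn_iff_continuous_restrict]
  have h1 : simplex2.domRestrict (SPq hom) = fun y => ((hom.symm y : S) : V3) := by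
    funext y
    rw [Set.domRestrict_apply]
    simp only [SPq, dif_pos y.2]
  rw [h1]
  exact continuous_subtype_val.comp hom.symm.continuous

lemma SPm_memS {z : V3} (hz : z ∈ octC) (h0 : z ≠ 0) : SPm hom z ∈ S :=
  SPq_memS hom (radProj_mem hz h0)

lemma SPm_rad (hh : ∀ p : S, ((hom p : simplex2) : V3) = radProj (p : V3))
    {z : V3} (hz : z ∈ octC) (h0 : z ≠ 0) :
    radProj (SPm hom z) = radProj z :=
  SPq_rad hom hh (radProj_mem hz h0)

lemma SPm_contOn : ContinuousOn (SPm hom) {z : V3 | z ∈ octC ∧ z ≠ 0} := by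
  have hrad : ContinuousOn radProj {z : V3 | z ∈ octC ∧ z ≠ 0} := by
    refine ContinuousOn.smul (f := fun z => (sumCoords z)⁻¹) (g := id) ?_ ?_
    · exact (cont_sumCoords.continuousOn).inv₀ (fun z hz => (sum_pos hz.1 hz.2).ne')
    · exact continuousOn_id
  exact (SPq_contOn hom).comp hrad (fun z hz => radProj_mem hz.1 hz.2)

end SPsec

end CSAux

namespace CSAux

lemma key_unordered {S : Set V3} (hom : S ≃ₜ simplex2)
    (hh : ∀ p : S, ((hom p : simplex2) : V3) = radProj (p : V3))
    (hSsub : S ⊆ octC) (h0S : (0 : V3) ∉ S)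
    (hup : ∀ a ∈ S, ∀ b ∈ S, a ≠ b → ¬ ∀ i, a i < b i)
    {p z : V3} (hp : p ∈ S) (hz : z ∈ S) (hp2 : p 2 = 0)
    (h0 : p 0 < z 0) (h1 : p 1 < z 1) : False := by
  have hzo : z ∈ octC := hSsub hz
  have hzne : z ≠ 0 := fun h => h0S (h ▸ hz)
  have hRz : radProj z ∈ simplex2 := radProj_mem hzo hzne
  -- center of the simplex
  set c : V3 := (3 : ℝ)⁻¹ • (e3 0 + e3 1 + e3 2) with hcdef
  have hci : ∀ i, c i = 3⁻¹ := by
    intro i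
    fin_cases i <;>
      simp [hcdef, e3, smul_apply', add_apply', EuclideanSpace.single_apply]
  have hc : c ∈ simplex2 := by
    constructor
    · intro i; rw [hci i]; norm_num
    · unfold sumCoords; rw [hci 0, hci 1, hci 2]; norm_num
  set γ : ℝ → V3 := fun θ => (1 - θ) • radProj z + θ • c with hγdef
  have hγmem : ∀ θ ∈ Ioc (0:ℝ) 1, γ θ ∈ simplex2 := by
    intro θ hθ
    constructor
    · intro i
      simp only [hγdef, add_apply', smul_apply']
      have h2 := hRz.1 i
      have h3 := hc.1 i
      nlinarith [hθ.1.le, hθ.2]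
    · show sumCoords _ = 1
      rw [hγdef]
      simp only []
      rw [sumCoords_add, sumCoords_smul, sumCoords_smul, hRz.2, hc.2]; ring
  have hγ2pos : ∀ θ ∈ Ioc (0:ℝ) 1, 0 < γ θ 2 := by
    intro θ hθ
    simp only [hγdef, add_apply', smul_apply']
    have h2 := hRz.1 2
    have h3 := hci 2
    nlinarith [hθ.1, hθ.2]
  have hγ0 : γ 0 = radProj z := by
    rw [hγdef]; simp
  have hγc : Continuous γ := by rw [hγdef]; fun_prop
  have hltend : Tendsto γ (𝓝[Ioc (0:ℝ) 1] 0) (𝓝[simplex2] (radProj z)) := by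
    apply tendsto_nhdsWithin_of_tendsto_nhds_of_eventually_within
    · have := (hγc.tendsto 0).mono_left (nhdsWithin_le_nhds (s := Ioc (0:ℝ) 1))
      rwa [hγ0] at this
    · exact eventually_mem_nhdsWithin.mono hγmem
  have hSPz : SPq hom (radProj z) = z := SPq_of_mem hom hh hz hRz
  have hq : Tendsto (fun θ => SPq hom (γ θ)) (𝓝[Ioc (0:ℝ) 1] 0) (𝓝 z) := by
    have hcwa : ContinuousWithinAt (SPq hom) simplex2 (radProj z) :=
      (SPq_contOn hom).continuousWithinAt hRz
    have := hcwa.tendsto.comp hltend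
    rwa [hSPz] at this
  have hNB : (𝓝[Ioc (0:ℝ) 1] (0:ℝ)).NeBot := by
    rw [← mem_closure_iff_nhdsWithin_neBot, closure_Ioc (by norm_num : (0:ℝ) ≠ 1)]
    exact ⟨le_refl 0, by norm_num⟩
  have hev0 : ∀ᶠ θ in 𝓝[Ioc (0:ℝ) 1] 0, p 0 < SPq hom (γ θ) 0 := by
    have ht : Tendsto (fun θ => SPq hom (γ θ) 0) (𝓝[Ioc (0:ℝ) 1] 0) (𝓝 (z 0)) :=
      ((PiLp.continuous_apply 2 _ (0 : Fin 3)).tendsto z).comp hq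
    exact ht.eventually (eventually_gt_nhds h0)
  have hev1 : ∀ᶠ θ in 𝓝[Ioc (0:ℝ) 1] 0, p 1 < SPq hom (γ θ) 1 := by
    have ht : Tendsto (fun θ => SPq hom (γ θ) 1) (𝓝[Ioc (0:ℝ) 1] 0) (𝓝 (z 1)) :=
      ((PiLp.continuous_apply 2 _ (1 : Fin 3)).tendsto z).comp hq
    exact ht.eventually (eventually_gt_nhds h1)
  have hevm : ∀ᶠ θ in 𝓝[Ioc (0:ℝ) 1] 0, θ ∈ Ioc (0:ℝ) 1 := eventually_mem_nhdsWithin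
  obtain ⟨θ, hθm, hθ0, hθ1⟩ := (hevm.and (hev0.and hev1)).exists
  set q := SPq hom (γ θ) with hqdef
  have hγθ := hγmem θ hθm
  have hqS : q ∈ S := SPq_memS hom hγθ
  have hqo : q ∈ octC := hSsub hqS
  have hqne : q ≠ 0 := fun h => h0S (h ▸ hqS)
  have hq2 : 0 < q 2 := by
    have hrq : radProj q = γ θ := SPq_rad hom hh hγθ
    have hsc : sumCoords q • radProj q = q := smul_radProj hqo hqne
    have h5 : q 2 = sumCoords q * γ θ 2 := by
      conv_lhs => rw [← hsc, hrq]
      rfl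
    rw [h5]
    exact mul_pos (sum_pos hqo hqne) (hγ2pos θ hθm)
  apply hup p hp q hqS
  · intro h
    rw [h] at hp2
    exact absurd hp2 hq2.ne'
  · intro i
    fin_cases i
    · exact hθ0
    · exact hθ1
    · show p 2 < q 2
      rw [hp2]; exact hq2

end CSAux


open Topology in
set_option maxHeartbeats 1000000 in
/-- The local graph representation of S over the line x + span{ẽ} along r, near
a planar fixed point x, with a continuous coordinate function j, j(0) = 0. -/
theorem local_graph_representation (E : CompSetting) (S : Set V3)
    (hS : IsCarryingSimplex E S) (hconv : Convex ℝ (gammaOf S))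
    (x : V3) (hxS : x ∈ S) (hxdot : x ∈ faceDot {0, 1}) (hxfix : E.Pt x = x)
    (M : Matrix (Fin 2) (Fin 2) ℝ)
    (hM : M = Matrix.of fun a b => jacM E.Pt x a.castSucc b.castSucc)
    (lam1 lam2 : ℝ)
    (hspec : ∀ t : ℝ,
      (∃ v : Fin 2 → ℝ, v ≠ 0 ∧ M⁻¹.mulVec v = t • v) ↔ t = lam1 ∨ t = lam2)
    (hlam : |lam2| < lam1)
    (r w : V3)
    (hr2 : r 2 = 0) (hr0 : 0 < r 0) (hr1 : 0 < r 1) (hrnorm : ‖r‖ = 1)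
    (hreig : fderiv ℝ E.Pt x r = lam1⁻¹ • r)
    (hw2 : w 2 = 0) (hwsign : w 0 * w 1 < 0) (hwnorm : ‖w‖ = 1)
    (hweig : fderiv ℝ E.Pt x w = lam2⁻¹ • w)
    (g1 : ℝ) :
    ∃ ε > (0:ℝ), ∃ η > (0:ℝ),
      x - ε • r ∈ gammaOf S ∧
      x + ε • r ∈ octC \ gammaOf S ∧
      (∀ δ ∈ Icc (0:ℝ) η, ∃! t : ℝ,
        t ∈ Icc (-ε) ε ∧ x + δ • (e3 2 + g1 • w) + t • r ∈ S) ∧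
      ∃ jf : ℝ → ℝ, ContinuousOn jf (Icc (0:ℝ) η) ∧ jf 0 = 0 ∧
        ∀ δ ∈ Icc (0:ℝ) η, -(jf δ) ∈ Icc (-ε) ε ∧
          x + δ • (e3 2 + g1 • w) - jf δ • r ∈ S := by
  classical
  obtain ⟨hcomp, hSsub, h0S, hPS, ⟨hom, hh⟩, hup, hord, hiii, hrest⟩ := hS
  have hx2 : x 2 = 0 := hxdot.1.2 2 (by decide)
  have hx0 : 0 < x 0 := hxdot.2 0 (by decide)
  have hx1 : 0 < x 1 := hxdot.2 1 (by decide)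
  set Cb : ℝ := 1 + r 0 + r 1 + |g1 * w 0| + |g1 * w 1| with hCbdef
  have hCb : 0 < Cb := by positivity
  set ε : ℝ := min (x 0) (x 1) / (2 * Cb) with hεdef
  have hmin0 : 0 < min (x 0) (x 1) := lt_min hx0 hx1
  have hε : 0 < ε := by rw [hεdef]; positivity
  have hεε : -ε ≤ ε := by linarith
  have hεCb : ε * Cb = min (x 0) (x 1) / 2 := by
    rw [hεdef]; field_simp
  have hexp : ε * Cb = ε * 1 + ε * r 0 + ε * r 1 + ε * |g1 * w 0| + ε * |g1 * w 1| := by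
    rw [hCbdef]; ring
  set ee : V3 := e3 2 + g1 • w with heedef
  set L : ℝ → ℝ → V3 := fun δ t => x + δ • ee + t • r with hLdef
  have he30 : e3 2 0 = 0 := by simp [e3, EuclideanSpace.single_apply]
  have he31 : e3 2 1 = 0 := by simp [e3, EuclideanSpace.single_apply]
  have he32 : e3 2 2 = 1 := by simp [e3, EuclideanSpace.single_apply]
  have hL0 : ∀ δ t, L δ t 0 = x 0 + δ * (g1 * w 0) + t * r 0 := by
    intro δ t
    have h1 : L δ t 0 = x 0 + δ * (e3 2 0 + g1 * w 0) + t * r 0 := rfl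
    rw [h1, he30]; ring
  have hL1 : ∀ δ t, L δ t 1 = x 1 + δ * (g1 * w 1) + t * r 1 := by
    intro δ t
    have h1 : L δ t 1 = x 1 + δ * (e3 2 1 + g1 * w 1) + t * r 1 := rfl
    rw [h1, he31]; ring
  have hL2 : ∀ δ t, L δ t 2 = δ := by
    intro δ t
    have h1 : L δ t 2 = x 2 + δ * (e3 2 2 + g1 * w 2) + t * r 2 := rfl
    rw [h1, he32, hx2, hw2, hr2]; ring
  have hLpos : ∀ δ t, 0 ≤ δ → δ ≤ ε → -ε ≤ t → t ≤ ε → 0 < L δ t 0 ∧ 0 < L δ t 1 := by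
    intro δ t h1 h2 h3 h4
    have e0 : -(ε * |g1 * w 0|) ≤ δ * (g1 * w 0) := by
      have h5 : |δ * (g1 * w 0)| ≤ ε * |g1 * w 0| := by
        rw [abs_mul, abs_of_nonneg h1]
        exact mul_le_mul_of_nonneg_right h2 (abs_nonneg _)
      linarith [neg_abs_le (δ * (g1 * w 0))]
    have e1 : -(ε * |g1 * w 1|) ≤ δ * (g1 * w 1) := by
      have h5 : |δ * (g1 * w 1)| ≤ ε * |g1 * w 1| := by
        rw [abs_mul, abs_of_nonneg h1]
        exact mul_le_mul_of_nonneg_right h2 (abs_nonneg _)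
      linarith [neg_abs_le (δ * (g1 * w 1))]
    have f0 : -(ε * r 0) ≤ t * r 0 := by
      have h5 := mul_le_mul_of_nonneg_right h3 hr0.le
      linarith
    have f1 : -(ε * r 1) ≤ t * r 1 := by
      have h5 := mul_le_mul_of_nonneg_right h3 hr1.le
      linarith
    have ga : 0 ≤ ε * r 0 := mul_nonneg hε.le hr0.le
    have gb : 0 ≤ ε * r 1 := mul_nonneg hε.le hr1.le
    have gc : 0 ≤ ε * |g1 * w 0| := mul_nonneg hε.le (abs_nonneg _)
    have gd : 0 ≤ ε * |g1 * w 1| := mul_nonneg hε.le (abs_nonneg _)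
    have hm1 : min (x 0) (x 1) ≤ x 0 := min_le_left _ _
    have hm2 : min (x 0) (x 1) ≤ x 1 := min_le_right _ _
    constructor
    · rw [hL0]; linarith
    · rw [hL1]; linarith
  have hLD : ∀ δ t, 0 ≤ δ → δ ≤ ε → -ε ≤ t → t ≤ ε → L δ t ∈ octC ∧ L δ t ≠ 0 := by
    intro δ t h1 h2 h3 h4
    obtain ⟨hp0, hp1⟩ := hLpos δ t h1 h2 h3 h4
    constructor
    · intro i
      fin_cases i
      · exact hp0.le
      · exact hp1.le
      · show (0:ℝ) ≤ L δ t 2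
        rw [hL2]; exact h1
    · intro hcon
      rw [hcon] at hp0
      exact lt_irrefl _ hp0
  have hnegD := hLD 0 (-ε) le_rfl hε.le le_rfl hεε
  have hposD := hLD 0 ε le_rfl hε.le hεε le_rfl
  have hJ0 : L 0 (-ε) 0 < x 0 := by
    rw [hL0]
    have h5 := mul_pos hε hr0
    linarith
  have hJ1 : L 0 (-ε) 1 < x 1 := by
    rw [hL1]
    have h5 := mul_pos hε hr1
    linarith
  have hK0 : x 0 < L 0 ε 0 := by
    rw [hL0]
    have h5 := mul_pos hε hr0
    linarith
  have hK1 : x 1 < L 0 ε 1 := by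
    rw [hL1]
    have h5 := mul_pos hε hr1
    linarith
  have hL00 : L 0 0 = x := by
    show x + (0:ℝ) • ee + (0:ℝ) • r = x
    rw [zero_smul, zero_smul, add_zero, add_zero]
  have hLneg : L 0 (-ε) = x - ε • r := by
    show x + (0:ℝ) • ee + (-ε) • r = x - ε • r
    rw [zero_smul, add_zero, neg_smul, sub_eq_add_neg]
  have hLpose : L 0 ε = x + ε • r := by
    show x + (0:ℝ) • ee + ε • r = x + ε • r
    rw [zero_smul, add_zero]
  -- the point of S above L 0 (-ε) is strictly larger radially
  have negEnd : sumCoords (L 0 (-ε)) < sumCoords (CSAux.SPm hom (L 0 (-ε))) := by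
    obtain ⟨hpo, hpne⟩ := hnegD
    set s := CSAux.SPm hom (L 0 (-ε)) with hsdef
    have hsS : s ∈ S := CSAux.SPm_memS hom hpo hpne
    have hso := hSsub hsS
    have hsne : s ≠ 0 := fun h => h0S (h ▸ hsS)
    have hsump : 0 < sumCoords (L 0 (-ε)) := CSAux.sum_pos hpo hpne
    have hsums : 0 < sumCoords s := CSAux.sum_pos hso hsne
    by_contra hcon
    push_neg at hcon
    have hrads : radProj s = radProj (L 0 (-ε)) := CSAux.SPm_rad hom hh hpo hpne
    have hseq : s = (sumCoords s / sumCoords (L 0 (-ε))) • (L 0 (-ε)) := by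
      calc s = sumCoords s • radProj s := (CSAux.smul_radProj hso hsne).symm
        _ = sumCoords s • ((sumCoords (L 0 (-ε)))⁻¹ • (L 0 (-ε))) := by rw [hrads]; rfl
        _ = (sumCoords s / sumCoords (L 0 (-ε))) • (L 0 (-ε)) := by
            rw [smul_smul, div_eq_mul_inv]
    have hcc1 : sumCoords s / sumCoords (L 0 (-ε)) ≤ 1 := by
      rw [div_le_one hsump]; exact hcon
    obtain ⟨hp0, hp1⟩ := hLpos 0 (-ε) le_rfl hε.le le_rfl hεε
    have hs0 : s 0 < x 0 := by
      have h5 : s 0 = (sumCoords s / sumCoords (L 0 (-ε))) * (L 0 (-ε)) 0 := by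
        conv_lhs => rw [hseq]
        rfl
      linarith [mul_le_of_le_one_left hp0.le hcc1, hJ0]
    have hs1 : s 1 < x 1 := by
      have h5 : s 1 = (sumCoords s / sumCoords (L 0 (-ε))) * (L 0 (-ε)) 1 := by
        conv_lhs => rw [hseq]
        rfl
      linarith [mul_le_of_le_one_left hp1.le hcc1, hJ1]
    have hs2 : s 2 = 0 := by
      have h5 : s 2 = (sumCoords s / sumCoords (L 0 (-ε))) * (L 0 (-ε)) 2 := by
        conv_lhs => rw [hseq]
        rfl
      have h6 : L 0 (-ε) 2 = 0 := hL2 0 (-ε)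
      rw [h5, h6, mul_zero]
    exact CSAux.key_unordered hom hh hSsub h0S hup hsS hxS hs2 hs0 hs1
  have posEnd : sumCoords (CSAux.SPm hom (L 0 ε)) < sumCoords (L 0 ε) := by
    obtain ⟨hpo, hpne⟩ := hposD
    set s := CSAux.SPm hom (L 0 ε) with hsdef
    have hsS : s ∈ S := CSAux.SPm_memS hom hpo hpne
    have hso := hSsub hsS
    have hsne : s ≠ 0 := fun h => h0S (h ▸ hsS)
    have hsump : 0 < sumCoords (L 0 ε) := CSAux.sum_pos hpo hpne
    have hsums : 0 < sumCoords s := CSAux.sum_pos hso hsne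
    by_contra hcon
    push_neg at hcon
    have hrads : radProj s = radProj (L 0 ε) := CSAux.SPm_rad hom hh hpo hpne
    have hseq : s = (sumCoords s / sumCoords (L 0 ε)) • (L 0 ε) := by
      calc s = sumCoords s • radProj s := (CSAux.smul_radProj hso hsne).symm
        _ = sumCoords s • ((sumCoords (L 0 ε))⁻¹ • (L 0 ε)) := by rw [hrads]; rfl
        _ = (sumCoords s / sumCoords (L 0 ε)) • (L 0 ε) := by
            rw [smul_smul, div_eq_mul_inv]
    have hcc1 : 1 ≤ sumCoords s / sumCoords (L 0 ε) := by
      rw [le_div_iff₀ hsump, one_mul]; exact hcon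
    obtain ⟨hq0, hq1⟩ := hLpos 0 ε le_rfl hε.le hεε le_rfl
    have hs0 : x 0 < s 0 := by
      have h5 : s 0 = (sumCoords s / sumCoords (L 0 ε)) * (L 0 ε) 0 := by
        conv_lhs => rw [hseq]
        rfl
      linarith [le_mul_of_one_le_left hq0.le hcc1, hK0]
    have hs1 : x 1 < s 1 := by
      have h5 : s 1 = (sumCoords s / sumCoords (L 0 ε)) * (L 0 ε) 1 := by
        conv_lhs => rw [hseq]
        rfl
      linarith [le_mul_of_one_le_left hq1.le hcc1, hK1]
    exact CSAux.key_unordered hom hh hSsub h0S hup hxS hsS hx2 hs0 hs1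
  -- (A): x - ε r ∈ Γ
  have hA : x - ε • r ∈ gammaOf S := by
    obtain ⟨hpo, hpne⟩ := hnegD
    have hsS : CSAux.SPm hom (L 0 (-ε)) ∈ S := CSAux.SPm_memS hom hpo hpne
    have hso := hSsub hsS
    have hsne : CSAux.SPm hom (L 0 (-ε)) ≠ 0 := fun h => h0S (h ▸ hsS)
    have hsump : 0 < sumCoords (L 0 (-ε)) := CSAux.sum_pos hpo hpne
    have hsums : 0 < sumCoords (CSAux.SPm hom (L 0 (-ε))) := CSAux.sum_pos hso hsne
    refine ⟨sumCoords (L 0 (-ε)) / sumCoords (CSAux.SPm hom (L 0 (-ε))),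
      ⟨le_of_lt (div_pos hsump hsums), (div_le_one hsums).2 negEnd.le⟩,
      CSAux.SPm hom (L 0 (-ε)), hsS, ?_⟩
    rw [← hLneg]
    have hrads : radProj (CSAux.SPm hom (L 0 (-ε))) = radProj (L 0 (-ε)) :=
      CSAux.SPm_rad hom hh hpo hpne
    have hsp : sumCoords (CSAux.SPm hom (L 0 (-ε))) • radProj (L 0 (-ε)) =
        CSAux.SPm hom (L 0 (-ε)) := by
      rw [← hrads]; exact CSAux.smul_radProj hso hsne
    have h7 : (sumCoords (L 0 (-ε)) / sumCoords (CSAux.SPm hom (L 0 (-ε)))) •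
        CSAux.SPm hom (L 0 (-ε)) = L 0 (-ε) := by
      have h8 : (sumCoords (L 0 (-ε)) / sumCoords (CSAux.SPm hom (L 0 (-ε)))) •
          CSAux.SPm hom (L 0 (-ε)) =
          (sumCoords (L 0 (-ε)) / sumCoords (CSAux.SPm hom (L 0 (-ε)))) •
          (sumCoords (CSAux.SPm hom (L 0 (-ε))) • radProj (L 0 (-ε))) := by rw [hsp]
      rw [h8, smul_smul, div_mul_cancel₀ _ hsums.ne']
      exact CSAux.smul_radProj hpo hpne
    exact h7.symm
  -- (B): x + ε r ∉ Γ
  have hB : x + ε • r ∈ octC \ gammaOf S := by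
    constructor
    · rw [← hLpose]; exact hposD.1
    · intro hmem
      obtain ⟨α, ⟨hα0, hα1⟩, s, hsS, heq⟩ := hmem
      rw [← hLpose] at heq
      obtain ⟨hq0, hq1⟩ := hLpos 0 ε le_rfl hε.le hεε le_rfl
      have hα0' : 0 < α := by
        rcases eq_or_lt_of_le hα0 with h | h
        · exfalso
          rw [← h, zero_smul] at heq
          rw [heq] at hq0
          exact lt_irrefl _ hq0
        · exact h
      have hs0' : 0 ≤ s 0 := hSsub hsS 0
      have hs1' : 0 ≤ s 1 := hSsub hsS 1
      have hc0 : L 0 ε 0 = α * s 0 := by rw [heq]; rfl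
      have hc1 : L 0 ε 1 = α * s 1 := by rw [heq]; rfl
      have hxs0 : x 0 < s 0 := by linarith [hK0, mul_le_of_le_one_left hs0' hα1, hc0]
      have hxs1 : x 1 < s 1 := by linarith [hK1, mul_le_of_le_one_left hs1' hα1, hc1]
      exact CSAux.key_unordered hom hh hSsub h0S hup hxS hsS hx2 hxs0 hxs1
  -- the radial gap function
  set ψ : V3 → ℝ := fun z => sumCoords z - sumCoords (CSAux.SPm hom z) with hψdef
  have hψcont : ContinuousOn ψ {z : V3 | z ∈ octC ∧ z ≠ 0} :=
    (CSAux.cont_sumCoords.continuousOn).sub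
      (CSAux.cont_sumCoords.comp_continuousOn (CSAux.SPm_contOn hom))
  have hΦ0 : ψ (L 0 (-ε)) < 0 := by
    simp only [hψdef]
    linarith [negEnd]
  have hΨ0 : 0 < ψ (L 0 ε) := by
    simp only [hψdef]
    linarith [posEnd]
  have hΦc : ContinuousWithinAt (fun δ => ψ (L δ (-ε))) (Icc (0:ℝ) ε) 0 := by
    have hcont : ContinuousOn (fun δ => ψ (L δ (-ε))) (Icc (0:ℝ) ε) := by
      apply hψcont.comp
      · exact Continuous.continuousOn
          (by show Continuous fun δ : ℝ => x + δ • ee + (-ε) • r; fun_prop)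
      · exact fun δ hδ => hLD δ (-ε) hδ.1 hδ.2 le_rfl hεε
    exact hcont.continuousWithinAt ⟨le_rfl, hε.le⟩
  have hΨc : ContinuousWithinAt (fun δ => ψ (L δ ε)) (Icc (0:ℝ) ε) 0 := by
    have hcont : ContinuousOn (fun δ => ψ (L δ ε)) (Icc (0:ℝ) ε) := by
      apply hψcont.comp
      · exact Continuous.continuousOn
          (by show Continuous fun δ : ℝ => x + δ • ee + ε • r; fun_prop)
      · exact fun δ hδ => hLD δ ε hδ.1 hδ.2 hεε le_rfl
    exact hcont.continuousWithinAt ⟨le_rfl, hε.le⟩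
  have hevΦ : ∀ᶠ δ in 𝓝[Icc (0:ℝ) ε] 0, ψ (L δ (-ε)) < 0 := by
    have h7 : ψ (L 0 (-ε)) < 0 := hΦ0
    exact hΦc.eventually (eventually_lt_nhds h7)
  have hevΨ : ∀ᶠ δ in 𝓝[Icc (0:ℝ) ε] 0, 0 < ψ (L δ ε) := by
    exact hΨc.eventually (eventually_gt_nhds hΨ0)
  obtain ⟨ρ, hρ, hρsub⟩ := mem_nhdsWithin_iff.1 (hevΦ.and hevΨ)
  set η : ℝ := min (ρ / 2) ε with hηdef
  have hη : 0 < η := lt_min (by linarith) hε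
  have hηε : η ≤ ε := min_le_right _ _
  have hgood : ∀ δ, 0 ≤ δ → δ ≤ η → ψ (L δ (-ε)) < 0 ∧ 0 < ψ (L δ ε) := by
    intro δ h1 h2
    apply hρsub
    constructor
    · rw [mem_ball, Real.dist_eq, sub_zero, abs_of_nonneg h1]
      have h3 : η ≤ ρ / 2 := min_le_left _ _
      linarith
    · exact ⟨h1, le_trans h2 hηε⟩
  have hSchar : ∀ z, z ∈ octC → z ≠ 0 → ψ z = 0 → z ∈ S := by
    intro z h1 h2 h3
    simp only [hψdef] at h3
    have h4 : sumCoords z = sumCoords (CSAux.SPm hom z) := by linarith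
    have hsS := CSAux.SPm_memS hom h1 h2
    have hso := hSsub hsS
    have hsne : CSAux.SPm hom z ≠ 0 := fun h => h0S (h ▸ hsS)
    have h5 : z = CSAux.SPm hom z := by
      calc z = sumCoords z • radProj z := (CSAux.smul_radProj h1 h2).symm
        _ = sumCoords (CSAux.SPm hom z) • radProj (CSAux.SPm hom z) := by
            rw [h4, CSAux.SPm_rad hom hh h1 h2]
        _ = CSAux.SPm hom z := CSAux.smul_radProj hso hsne
    rw [h5]; exact hsS
  -- uniqueness of the intersection point
  have hmain : ∀ δ, 0 ≤ δ → δ ≤ η → ∀ t₁, t₁ ∈ Icc (-ε) ε → L δ t₁ ∈ S →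
      ∀ t₂, t₂ ∈ Icc (-ε) ε → L δ t₂ ∈ S → t₁ < t₂ → False := by
    intro δ h1 h2 t₁ ht₁ hS₁ t₂ ht₂ hS₂ hlt
    have hδε : δ ≤ ε := le_trans h2 hηε
    have h01 : L δ t₁ 0 < L δ t₂ 0 := by
      rw [hL0, hL0]
      have h5 := mul_lt_mul_of_pos_right hlt hr0
      linarith
    have h11 : L δ t₁ 1 < L δ t₂ 1 := by
      rw [hL1, hL1]
      have h5 := mul_lt_mul_of_pos_right hlt hr1
      linarith
    rcases eq_or_lt_of_le h1 with hδ0 | hδpos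
    · have h2' : L δ t₁ 2 = 0 := by rw [hL2]; exact hδ0.symm
      exact CSAux.key_unordered hom hh hSsub h0S hup hS₁ hS₂ h2' h01 h11
    · have hm1 : L δ t₁ ∈ S ∩ octInt := by
        refine ⟨hS₁, ?_⟩
        intro i
        fin_cases i
        · exact (hLpos δ t₁ h1 hδε ht₁.1 ht₁.2).1
        · exact (hLpos δ t₁ h1 hδε ht₁.1 ht₁.2).2
        · show (0:ℝ) < L δ t₁ 2
          rw [hL2]; exact hδpos
      have hm2 : L δ t₂ ∈ S ∩ octInt := by
        refine ⟨hS₂, ?_⟩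
        intro i
        fin_cases i
        · exact (hLpos δ t₂ h1 hδε ht₂.1 ht₂.2).1
        · exact (hLpos δ t₂ h1 hδε ht₂.1 ht₂.2).2
        · show (0:ℝ) < L δ t₂ 2
          rw [hL2]; exact hδpos
      apply hord _ hm1 _ hm2
      · intro hcon
        rw [hcon] at h01
        exact lt_irrefl _ h01
      · intro i
        fin_cases i
        · exact h01.le
        · exact h11.le
        · show L δ t₁ 2 ≤ L δ t₂ 2
          rw [hL2, hL2]
  have huniq : ∀ δ, 0 ≤ δ → δ ≤ η → ∀ t₁, t₁ ∈ Icc (-ε) ε → L δ t₁ ∈ S →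
      ∀ t₂, t₂ ∈ Icc (-ε) ε → L δ t₂ ∈ S → t₁ = t₂ := by
    intro δ h1 h2 t₁ ht₁ hS₁ t₂ ht₂ hS₂
    rcases lt_trichotomy t₁ t₂ with h | h | h
    · exact (hmain δ h1 h2 t₁ ht₁ hS₁ t₂ ht₂ hS₂ h).elim
    · exact h
    · exact (hmain δ h1 h2 t₂ ht₂ hS₂ t₁ ht₁ hS₁ h).elim
  -- existence of the intersection point
  have hex : ∀ δ, 0 ≤ δ → δ ≤ η → ∃ t, t ∈ Icc (-ε) ε ∧ L δ t ∈ S := by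
    intro δ h1 h2
    have hδε : δ ≤ ε := le_trans h2 hηε
    have hGc : ContinuousOn (fun t => ψ (L δ t)) (Icc (-ε) ε) := by
      apply hψcont.comp
      · exact Continuous.continuousOn
          (by show Continuous fun t : ℝ => x + δ • ee + t • r; fun_prop)
      · exact fun t ht => hLD δ t h1 hδε ht.1 ht.2
    have h0mem : (0:ℝ) ∈ Icc (ψ (L δ (-ε))) (ψ (L δ ε)) :=
      ⟨(hgood δ h1 h2).1.le, (hgood δ h1 h2).2.le⟩
    obtain ⟨t, htm, ht0⟩ := intermediate_value_Icc hεε hGc h0mem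
    exact ⟨t, htm, hSchar _ (hLD δ t h1 hδε htm.1 htm.2).1 (hLD δ t h1 hδε htm.1 htm.2).2 ht0⟩
  have H : ∀ δ, δ ∈ Icc (0:ℝ) η → ∃! t, t ∈ Icc (-ε) ε ∧ L δ t ∈ S := by
    intro δ hδ
    obtain ⟨t, ht⟩ := hex δ hδ.1 hδ.2
    exact ⟨t, ht, fun t' ht' => huniq δ hδ.1 hδ.2 t' ht'.1 ht'.2 t ht.1 ht.2⟩
  set T : ℝ → ℝ := fun δ => if hδ : δ ∈ Icc (0:ℝ) η then (H δ hδ).choose else 0 with hTdef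
  have hTspec : ∀ δ, ∀ hδ : δ ∈ Icc (0:ℝ) η, T δ ∈ Icc (-ε) ε ∧ L δ (T δ) ∈ S := by
    intro δ hδ
    have h5 : T δ = (H δ hδ).choose := by rw [hTdef]; exact dif_pos hδ
    rw [h5]
    exact (H δ hδ).choose_spec.1
  have hTuniq : ∀ δ, ∀ _hδ : δ ∈ Icc (0:ℝ) η, ∀ t, t ∈ Icc (-ε) ε → L δ t ∈ S → t = T δ := by
    intro δ hδ t h6 h7
    have h5 : T δ = (H δ hδ).choose := by rw [hTdef]; exact dif_pos hδ
    rw [h5]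
    exact (H δ hδ).choose_spec.2 t ⟨h6, h7⟩
  have hTIcc : ∀ δ, T δ ∈ Icc (-ε) ε := by
    intro δ
    by_cases hδ : δ ∈ Icc (0:ℝ) η
    · exact (hTspec δ hδ).1
    · have h5 : T δ = 0 := by rw [hTdef]; exact dif_neg hδ
      rw [h5]; exact ⟨by linarith, hε.le⟩
  have hT0 : T 0 = 0 := by
    have h0m : (0:ℝ) ∈ Icc (0:ℝ) η := ⟨le_rfl, hη.le⟩
    have hx' : L 0 0 ∈ S := by rw [hL00]; exact hxS
    exact (hTuniq 0 h0m 0 ⟨by linarith, hε.le⟩ hx').symm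
  have hclosedS : IsClosed S := hcomp.isClosed
  have hTcont : ContinuousOn T (Icc (0:ℝ) η) := by
    intro δ₀ hδ₀
    have hgoal : Tendsto T (𝓝[Icc (0:ℝ) η] δ₀) (𝓝 (T δ₀)) := by
      apply Filter.tendsto_of_subseq_tendsto
      intro ns hns
      have hns' : Tendsto ns atTop (𝓝 δ₀) := hns.mono_right nhdsWithin_le_nhds
      have hnsm : ∀ᶠ n in atTop, ns n ∈ Icc (0:ℝ) η := hns.eventually eventually_mem_nhdsWithin
      obtain ⟨a, haI, φ, hφmono, hφtend⟩ := isCompact_Icc.tendsto_subseq (fun n => hTIcc (ns n))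
      refine ⟨φ, ?_⟩
      have hv : Tendsto (fun n => T (ns (φ n))) atTop (𝓝 a) := hφtend
      have ha : a = T δ₀ := by
        have htendδ : Tendsto (fun n => ns (φ n)) atTop (𝓝 δ₀) := hns'.comp hφmono.tendsto_atTop
        have htendL : Tendsto (fun n => L (ns (φ n)) (T (ns (φ n)))) atTop (𝓝 (L δ₀ a)) := by
          have h7 : Tendsto (fun n => x + (ns (φ n)) • ee + (T (ns (φ n))) • r) atTop
              (𝓝 (x + δ₀ • ee + a • r)) :=
            (tendsto_const_nhds.add (htendδ.smul_const ee)).add (hv.smul_const r)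
          exact h7
        have hmemS : ∀ᶠ n in atTop, L (ns (φ n)) (T (ns (φ n))) ∈ S := by
          have h8 : ∀ᶠ n in atTop, ns (φ n) ∈ Icc (0:ℝ) η :=
            hφmono.tendsto_atTop.eventually hnsm
          exact h8.mono (fun n hn => (hTspec _ hn).2)
        have hLaS : L δ₀ a ∈ S := hclosedS.mem_of_tendsto htendL hmemS
        exact hTuniq δ₀ hδ₀ a haI hLaS
      rw [← ha]
      exact hv
    exact hgoal
  refine ⟨ε, hε, η, hη, hA, hB, ?_, ?_⟩
  · intro δ hδ
    exact H δ hδ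
  · refine ⟨fun δ => -(T δ), hTcont.neg, ?_, ?_⟩
    · show -(T 0) = 0
      rw [hT0, neg_zero]
    · intro δ hδ
      constructor
      · show -(-(T δ)) ∈ Icc (-ε) ε
        rw [neg_neg]
        exact (hTspec δ hδ).1
      · show x + δ • ee - (-(T δ)) • r ∈ S
        rw [neg_smul, sub_neg_eq_add]
        exact (hTspec δ hδ).2
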